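/- In the semigroup H, the element L itself is nonzero, and more generally L·a_i ≠ 0 for each i ∈ {1,2,3}. -/

import Mathlib

inductive Phi
  | L | M | P | Q | R | g | s1 | s2 | t1 | t2 | t3 | a1 | a2 | a3
deriving DecidableEq

open Phi

abbrev W0 := WithZero (FreeMonoid Phi)

def w (l : List Phi) : W0 := ((FreeMonoid.ofList l : FreeMonoid Phi) : W0)

def ai : Fin 3 → Phi
  | 0 => a1 | 1 => a2 | 2 => a3

def ti : Fin 3 → Phi
  | 0 => t1 | 1 => t2 | 2 => t3

def si : Fin 2 → Phi
  | 0 => s1 | 1 => s2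

/-- `x` is one of the letters `a1, a2, a3`. -/
def isA (x : Phi) : Prop := x = a1 ∨ x = a2 ∨ x = a3

/-- The defining relations (1)–(14) of the semigroup `H`. -/
inductive rel : W0 → W0 → Prop
  | r1L (x : Phi) : rel (w [x, L]) 0
  | r1M (x : Phi) : rel (w [x, M]) 0
  | r2 : rel (w [L]) (w [M, P, g])
  | r3 (i : Fin 3) : rel (w [g, ai i]) (w [ai i, g])
  | r4 (x : Phi) (h : ¬ isA x) : rel (w [g, x]) 0
  | r5 (i j : Fin 3) : rel (w [ai i, g, ai j]) (w [ai i, R, s1, Q, ai j])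
  | r6 (i : Fin 3) (x : Phi) (h : x = R ∨ isA x) : rel (w [ti i, x]) (w [x, ti i])
  | r7 (i : Fin 3) : rel (w [P, ai i, ti i]) (w [ai i, P, s1])
  | r8 (i j : Fin 3) (h : i ≠ j) : rel (w [P, ai j, ti i]) (w [ai j, P, s2])
  | r9 (i : Fin 3) (j : Fin 2) : rel (w [si j, ai i]) (w [ai i, si j])
  | r10 : rel (w [s1, R]) (w [R, s1])
  | r11 (i : Fin 3) : rel (w [s1, Q, ai i]) (w [ti i, ai i, Q])
  | r12 : rel (w [P, R, s1]) 0
  | r13 (i : Fin 3) : rel (w [s2, R, ai i]) (w [ai i, s2, R])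
  | r14 (i : Fin 3) : rel (w [s2, R, Q, ai i]) (w [R, ti i, ai i, Q])

/-- The congruence on the free monoid with zero generated by the relations. -/
def hCon : Con W0 := conGen rel

/-- The semigroup (with zero) `H` of the paper. -/
abbrev H := hCon.Quotient

/-- The quotient map. -/
def q : W0 →* H := hCon.mk'

/-- `l` is a word in the letters `a1, a2, a3`. -/
def Aword (l : List Phi) : Prop := ∀ x ∈ l, isA x

/-- `l` is square-free: it contains no factor `Y ++ Y` with `Y` nonempty. -/
def SqFree (l : List Phi) : Prop := ∀ Y : List Phi, Y ≠ [] → ¬ (Y ++ Y) <:+: l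

/-! ### A finite partial-function model

We exhibit a model of the relations by partial transformations of a 6-element
state set, in which `L` and `L·aᵢ` act nontrivially.  Words act on states
with the *last* letter applied first (matching composition in `Function.End`). -/

instance : Fintype Phi where
  elems := ⟨[L, M, P, Q, R, g, s1, s2, t1, t2, t3, a1, a2, a3], by decide⟩
  complete := by intro x; cases x <;> decide

instance : DecidableEq (FreeMonoid Phi) := inferInstanceAs (DecidableEq (List Phi))

instance : DecidableEq W0 := inferInstanceAs (DecidableEq (Option (FreeMonoid Phi)))

abbrev St := Option (Fin 6)

/-- Transition table of the model. -/
def dl (x : Phi) (s : Fin 6) : Option (Fin 6) :=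
  match x with
  | Phi.M => if s = 1 then some 0 else none
  | Phi.P => if s = 2 then some 1 else none
  | Phi.L => if s = 3 then some 0 else none
  | Phi.g => if s = 3 then some 2 else if s = 5 then some 4 else none
  | Phi.a1 => if s = 4 then some 2 else if s = 5 then some 3 else none
  | Phi.a2 => if s = 4 then some 2 else if s = 5 then some 3 else none
  | Phi.a3 => if s = 4 then some 2 else if s = 5 then some 3 else none
  | _ => none

def act (x : Phi) : Function.End St := fun s => s.bind (dl x)

def run (l : List Phi) : St → St := fun s => l.foldr (fun x t => act x t) s

def phi : FreeMonoid Phi →* Function.End St := FreeMonoid.lift act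

lemma phi_ofList (l : List Phi) : phi (FreeMonoid.ofList l) = run l := by
  rw [phi, FreeMonoid.lift_ofList]
  induction l with
  | nil => rfl
  | cons x xs ih =>
    funext s
    show (act x * (xs.map act).prod) s = _
    rw [Function.End.mul_def]
    show act x ((xs.map act).prod s) = _
    rw [ih]
    rfl

lemma run_none (l : List Phi) : run l none = none := by
  induction l with
  | nil => rfl
  | cons x xs ih =>
    show act x (run xs none) = none
    rw [ih]; rfl

/-- The evaluation map `W0 → Function.End St`; `0` goes to the empty map. -/
def psi : W0 → Function.End St := fun x =>
  if h : x = 0 then (fun _ => none) else phi (WithZero.unzero h)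

lemma psi_zero : psi 0 = fun _ => none := by
  simp [psi]
  rfl

lemma psi_coe (m : FreeMonoid Phi) : psi (m : W0) = phi m := by
  simp only [psi]
  exact dif_neg WithZero.coe_ne_zero

lemma psi_w (l : List Phi) : psi (w l) = run l := by
  rw [w, psi_coe, phi_ofList]

lemma psi_none (x : W0) : psi x none = none := by
  rcases eq_or_ne x 0 with rfl | h
  · rw [psi_zero]
  · obtain ⟨m, rfl⟩ := WithZero.ne_zero_iff_exists.mp h
    rw [psi_coe, ← FreeMonoid.ofList_toList m, phi_ofList, run_none]

lemma psi_mul (x y : W0) : psi (x * y) = fun s => psi x (psi y s) := by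
  rcases eq_or_ne x 0 with rfl | hx
  · rw [zero_mul, psi_zero]
  rcases eq_or_ne y 0 with rfl | hy
  · rw [mul_zero, psi_zero]
    funext s
    exact (psi_none x).symm
  obtain ⟨m, rfl⟩ := WithZero.ne_zero_iff_exists.mp hx
  obtain ⟨k, rfl⟩ := WithZero.ne_zero_iff_exists.mp hy
  rw [← WithZero.coe_mul, psi_coe, psi_coe, psi_coe, map_mul]
  rfl

/-- The congruence induced by the model. -/
def cc : Con W0 where
  r a b := psi a = psi b
  iseqv := ⟨fun _ => rfl, Eq.symm, Eq.trans⟩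
  mul' h1 h2 := by
    show psi _ = psi _
    rw [psi_mul, psi_mul]
    show (fun s => psi _ (psi _ s)) = (fun s => psi _ (psi _ s))
    rw [h1, h2]

lemma key : hCon ≤ cc := by
  refine Con.conGen_le.mpr ?_
  intro x y h
  cases h with
  | r1L x =>
    show psi _ = psi _
    rw [psi_w, psi_zero]
    refine funext fun s => ?_
    revert x s; decide
  | r1M x =>
    show psi _ = psi _
    rw [psi_w, psi_zero]
    refine funext fun s => ?_
    revert x s; decide
  | r2 =>
    show psi _ = psi _
    rw [psi_w, psi_w]
    refine funext fun s => ?_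
    revert s; decide
  | r3 i =>
    show psi _ = psi _
    rw [psi_w, psi_w]
    refine funext fun s => ?_
    revert i s; decide
  | r4 x h =>
    show psi _ = psi _
    rw [psi_w, psi_zero]
    cases x <;> first
      | (refine funext fun s => ?_; revert s; decide)
      | exact absurd (Or.inl rfl) h
      | exact absurd (Or.inr (Or.inl rfl)) h
      | exact absurd (Or.inr (Or.inr rfl)) h
  | r5 i j =>
    show psi _ = psi _
    rw [psi_w, psi_w]
    refine funext fun s => ?_
    revert i j s; decide
  | r6 i x h =>
    show psi _ = psi _
    rw [psi_w, psi_w]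
    clear h
    refine funext fun s => ?_
    revert i x s; decide
  | r7 i =>
    show psi _ = psi _
    rw [psi_w, psi_w]
    refine funext fun s => ?_
    revert i s; decide
  | r8 i j h =>
    show psi _ = psi _
    rw [psi_w, psi_w]
    clear h
    refine funext fun s => ?_
    revert i j s; decide
  | r9 i j =>
    show psi _ = psi _
    rw [psi_w, psi_w]
    refine funext fun s => ?_
    revert i j s; decide
  | r10 =>
    show psi _ = psi _
    rw [psi_w, psi_w]
    refine funext fun s => ?_
    revert s; decide
  | r11 i =>
    show psi _ = psi _
    rw [psi_w, psi_w]
    refine funext fun s => ?_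
    revert i s; decide
  | r12 =>
    show psi _ = psi _
    rw [psi_w, psi_zero]
    refine funext fun s => ?_
    revert s; decide
  | r13 i =>
    show psi _ = psi _
    rw [psi_w, psi_w]
    refine funext fun s => ?_
    revert i s; decide
  | r14 i =>
    show psi _ = psi _
    rw [psi_w, psi_w]
    refine funext fun s => ?_
    revert i s; decide

lemma not_con_of_psi {x y : W0} (h : psi x ≠ psi y) : q x ≠ q y := by
  intro hq
  exact h (Con.le_def.mp key (hCon.eq.mp hq))

/-- `L ≠ 0` in `H`, and `L·aᵢ ≠ 0` for each `i`. -/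
theorem stmt18 : q (w [L]) ≠ q 0 ∧ ∀ i : Fin 3, q (w [L, ai i]) ≠ q 0 := by
  constructor
  · apply not_con_of_psi
    rw [psi_w, psi_zero]
    intro h
    exact absurd (congrFun h (some 3)) (by decide)
  · intro i
    apply not_con_of_psi
    rw [psi_w, psi_zero]
    intro h
    have h5 := congrFun h (some 5)
    revert h5
    fin_cases i <;> decide
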